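/- Let F_1, F_2 be the coupled diffusion–convection operators defined in the context, with arbitrary real parameters. Suppose δ_{s,i} : ℝ → ℝ (s = 1,2; i = 1,2,3,4) are differentiable, and define u_s(x_1, x_2, t) = δ_{s,1}(t) + δ_{s,2}(t)x_1 + δ_{s,3}(t)x_2 + δ_{s,4}(t)x_1x_2. Then ∂u_s/∂t (x_1,x_2,t) = F_s(u_1(·,·,t), u_2(·,·,t))(x_1,x_2) holds for all (x_1,x_2,t) ∈ ℝ³ and s = 1,2 if and only if for all t ∈ ℝ and s = 1,2: δ_{s,1}'(t) = g_{s0}δ_{2,2}(t) + h_{s0}δ_{2,3}(t) + η_{s0}δ_{1,2}(t) + d_{s0}δ_{1,3}(t), δ_{s,2}'(t) = h_{s0}δ_{2,4}(t) + d_{s0}δ_{1,4}(t), δ_{s,3}'(t) = g_{s0}δ_{2,4}(t) + η_{s0}δ_{1,4}(t), and δ_{s,4}'(t) = 0. -/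
import Mathlib


/-- Partial derivative in the first variable of a function `ℝ → ℝ → ℝ`. -/
noncomputable def pd1 (u : ℝ → ℝ → ℝ) : ℝ → ℝ → ℝ := fun x1 x2 => deriv (fun y => u y x2) x1

/-- Partial derivative in the second variable of a function `ℝ → ℝ → ℝ`. -/
noncomputable def pd2 (u : ℝ → ℝ → ℝ) : ℝ → ℝ → ℝ := fun x1 x2 => deriv (fun y => u x1 y) x2

/-- The coupled diffusion–convection operator `F_s`. -/
noncomputable def Fop (k0 q0 q1 p0 c0 c1 e0 g0 d0 h0 : ℝ) (u1 u2 : ℝ → ℝ → ℝ) : ℝ → ℝ → ℝ :=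
  fun x1 x2 =>
    pd1 (fun a b => (k0 - q1 * u2 a b) * pd1 u1 a b + (q1 * u1 a b + q0) * pd1 u2 a b) x1 x2 +
    pd2 (fun a b => (p0 - c1 * u2 a b) * pd2 u1 a b + (c1 * u1 a b + c0) * pd2 u2 a b) x1 x2 +
    e0 * pd1 u1 x1 x2 + g0 * pd1 u2 x1 x2 + d0 * pd2 u1 x1 x2 + h0 * pd2 u2 x1 x2

lemma deriv_affine (c m x : ℝ) : deriv (fun y : ℝ => c + m * y) x = m := by
  have hd : HasDerivAt (fun y : ℝ => c + m * y) (0 + m * 1) x :=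
    (hasDerivAt_const x c).add ((hasDerivAt_id x).const_mul m)
  simpa using hd.deriv

lemma pd1_P (A B C D x1 x2 : ℝ) :
    pd1 (fun a b => A + B * a + C * b + D * a * b) x1 x2 = B + D * x2 := by
  have he : (fun y : ℝ => A + B * y + C * x2 + D * y * x2)
      = fun y => (A + C * x2) + (B + D * x2) * y := by funext y; ring
  simp only [pd1]
  rw [he, deriv_affine]

lemma pd2_P (A B C D x1 x2 : ℝ) :
    pd2 (fun a b => A + B * a + C * b + D * a * b) x1 x2 = C + D * x1 := by
  have he : (fun y : ℝ => A + B * x1 + C * y + D * x1 * y)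
      = fun y => (A + B * x1) + (C + D * x1) * y := by funext y; ring
  simp only [pd2]
  rw [he, deriv_affine]

lemma Fop_P (k0 q0 q1 p0 c0 c1 e0 g0 d0 h0 A1 B1 C1 D1 A2 B2 C2 D2 x1 x2 : ℝ) :
    Fop k0 q0 q1 p0 c0 c1 e0 g0 d0 h0
      (fun a b => A1 + B1 * a + C1 * b + D1 * a * b)
      (fun a b => A2 + B2 * a + C2 * b + D2 * a * b) x1 x2 =
      e0 * (B1 + D1 * x2) + g0 * (B2 + D2 * x2) + d0 * (C1 + D1 * x1) + h0 * (C2 + D2 * x1) := by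
  simp only [Fop, pd1_P, pd2_P]
  have h1 : (fun y : ℝ =>
      (k0 - q1 * (A2 + B2 * y + C2 * x2 + D2 * y * x2)) * (B1 + D1 * x2) +
      (q1 * (A1 + B1 * y + C1 * x2 + D1 * y * x2) + q0) * (B2 + D2 * x2))
      = fun _ => (k0 - q1 * (A2 + C2 * x2)) * (B1 + D1 * x2) +
          (q1 * (A1 + C1 * x2) + q0) * (B2 + D2 * x2) := by
    funext y; ring
  have h2 : (fun y : ℝ =>
      (p0 - c1 * (A2 + B2 * x1 + C2 * y + D2 * x1 * y)) * (C1 + D1 * x1) +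
      (c1 * (A1 + B1 * x1 + C1 * y + D1 * x1 * y) + c0) * (C2 + D2 * x1))
      = fun _ => (p0 - c1 * (A2 + B2 * x1)) * (C1 + D1 * x1) +
          (c1 * (A1 + B1 * x1) + c0) * (C2 + D2 * x1) := by
    funext y; ring
  simp only [pd1, pd2]
  rw [h1, h2, deriv_const, deriv_const]
  ring

/-- The bilinear separable ansatz solves the coupled system iff the coefficient
functions satisfy the reduced ODE system. -/
theorem stmt_4 (k0 q0 q1 p0 c0 c1 η g d h : Fin 2 → ℝ)
    (δ : Fin 2 → Fin 4 → ℝ → ℝ) (hδ : ∀ s i, Differentiable ℝ (δ s i))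
    (u : Fin 2 → ℝ → ℝ → ℝ → ℝ)
    (hu : ∀ s x1 x2 t, u s x1 x2 t =
      δ s 0 t + δ s 1 t * x1 + δ s 2 t * x2 + δ s 3 t * x1 * x2) :
    (∀ (s : Fin 2) (x1 x2 t : ℝ),
      deriv (fun τ => u s x1 x2 τ) t =
        Fop (k0 s) (q0 s) (q1 s) (p0 s) (c0 s) (c1 s) (η s) (g s) (d s) (h s)
          (fun a b => u 0 a b t) (fun a b => u 1 a b t) x1 x2) ↔
    (∀ (s : Fin 2) (t : ℝ),
      deriv (δ s 0) t = g s * δ 1 1 t + h s * δ 1 2 t + η s * δ 0 1 t + d s * δ 0 2 t ∧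
      deriv (δ s 1) t = h s * δ 1 3 t + d s * δ 0 3 t ∧
      deriv (δ s 2) t = g s * δ 1 3 t + η s * δ 0 3 t ∧
      deriv (δ s 3) t = 0) := by
  have hdt : ∀ (s : Fin 2) (x1 x2 t : ℝ), deriv (fun τ => u s x1 x2 τ) t =
      deriv (δ s 0) t + deriv (δ s 1) t * x1 + deriv (δ s 2) t * x2 +
        deriv (δ s 3) t * x1 * x2 := by
    intro s x1 x2 t
    have he : (fun τ => u s x1 x2 τ)
        = fun τ => δ s 0 τ + δ s 1 τ * x1 + δ s 2 τ * x2 + δ s 3 τ * x1 * x2 :=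
      funext fun τ => hu s x1 x2 τ
    rw [he]
    exact ((((hδ s 0 t).hasDerivAt.add ((hδ s 1 t).hasDerivAt.mul_const x1)).add
      ((hδ s 2 t).hasDerivAt.mul_const x2)).add
      (((hδ s 3 t).hasDerivAt.mul_const x1).mul_const x2)).deriv
  have hF : ∀ (s : Fin 2) (x1 x2 t : ℝ),
      Fop (k0 s) (q0 s) (q1 s) (p0 s) (c0 s) (c1 s) (η s) (g s) (d s) (h s)
        (fun a b => u 0 a b t) (fun a b => u 1 a b t) x1 x2 =
      η s * (δ 0 1 t + δ 0 3 t * x2) + g s * (δ 1 1 t + δ 1 3 t * x2) +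
        d s * (δ 0 2 t + δ 0 3 t * x1) + h s * (δ 1 2 t + δ 1 3 t * x1) := by
    intro s x1 x2 t
    have e0 : (fun a b => u 0 a b t)
        = fun a b => δ 0 0 t + δ 0 1 t * a + δ 0 2 t * b + δ 0 3 t * a * b :=
      funext fun a => funext fun b => hu 0 a b t
    have e1 : (fun a b => u 1 a b t)
        = fun a b => δ 1 0 t + δ 1 1 t * a + δ 1 2 t * b + δ 1 3 t * a * b :=
      funext fun a => funext fun b => hu 1 a b t
    rw [e0, e1, Fop_P]
  constructor
  · intro H s t
    have h00 := H s 0 0 t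
    have h10 := H s 1 0 t
    have h01 := H s 0 1 t
    have h11 := H s 1 1 t
    rw [hdt, hF] at h00 h10 h01 h11
    ring_nf at h00 h10 h01 h11
    refine ⟨by linarith, by linarith, by linarith, by linarith⟩
  · intro H s x1 x2 t
    obtain ⟨h1, h2, h3, h4⟩ := H s t
    rw [hdt, hF, h1, h2, h3, h4]
    ring
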